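/- arXiv:2208.09186 — 3 statements merged into one kernel-verified Lean document; each statement's English description precedes it below -/
import Mathlib

section
/- Let P ∈ ℝ[X] be of degree n ≥ 1 and let u ∈ ℝ be a root of P of multiplicity r, so that P^{(i)}(u) = 0 for 0 ≤ i < r and P^{(r)}(u) ≠ 0. Define the linear map L : ℝ*[X] → ℝ* by L(H) = −r!·(eval of H at u)/P^{(r)}(u). Then for every *ℝ-deformation Q of P with Q ≠ P (viewing P in ℝ*[X]) and every root ξ ∈ ℝ* of Q with st ξ = u, there exists an infinitesimal ε ∈ ℝ* such that (ξ − u)^r = L(Q − P) + ε·‖Q − P‖, where for H ∈ ℝ*[X] we set ‖H‖ := max over 0 ≤ i ≤ n of |coeff_i(H)|. -/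
open Hyperreal Polynomial

/-- The coercion `ℝ → ℝ*` as a ring homomorphism. -/
noncomputable def realToHyper : ℝ →+* ℝ* :=
  (Filter.Germ.coeRingHom _).comp (Pi.constRingHom ℕ ℝ)

/-- The sup-norm `‖H‖ = max_{0 ≤ i ≤ n} |coeff i H|` of a hyperreal polynomial. -/
noncomputable def polyNorm (n : ℕ) (H : Polynomial ℝ*) : ℝ* :=
  (Finset.range (n + 1)).sup' (Finset.nonempty_range_iff.mpr (Nat.succ_ne_zero n))
    fun i => |H.coeff i|

lemma realToHyper_apply (r : ℝ) : realToHyper r = (r : ℝ*) := rfl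

lemma isSt_pow {x : ℝ*} {s : ℝ} (h : IsSt x s) (k : ℕ) : IsSt (x ^ k) (s ^ k) := by
  induction k with
  | zero => simpa using isSt_refl_real 1
  | succ k ih => rw [pow_succ, pow_succ]; exact ih.mul h

lemma isSt_eval (p : Polynomial ℝ) {x : ℝ*} {s : ℝ} (h : IsSt x s) :
    IsSt ((p.map realToHyper).eval x) (p.eval s) := by
  induction p using Polynomial.induction_on' with
  | add p q hp hq => simp only [Polynomial.map_add, eval_add]; exact hp.add hq
  | monomial k a =>
      simp only [map_monomial, eval_monomial, realToHyper_apply]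
      exact (isSt_refl_real a).mul (isSt_pow h k)

lemma Hyperreal.Infinitesimal.abs' {x : ℝ*} (h : Infinitesimal x) : Infinitesimal |x| := by
  rw [infinitesimal_def] at h ⊢
  intro r hr
  obtain ⟨h1, h2⟩ := h r hr
  refine ⟨lt_of_lt_of_le (by simpa using coe_pos.2 hr) (abs_nonneg x), abs_lt.2 ⟨h1, h2⟩⟩

lemma infinitesimal_of_abs_le {x y : ℝ*} (hy : Infinitesimal y) (h : |x| ≤ y) :
    Infinitesimal x := by
  rw [infinitesimal_def] at hy ⊢
  intro r hr
  exact abs_lt.1 (lt_of_le_of_lt h (hy r hr).2)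

lemma not_infinite_of_abs_le {x : ℝ*} {r : ℝ} (h : |x| ≤ (r : ℝ*)) : ¬ Infinite x := by
  rw [not_infinite_iff_exist_lt_gt]
  obtain ⟨h1, h2⟩ := abs_le.1 h
  exact ⟨-(r + 1), r + 1, by push_cast; linarith, by push_cast; linarith⟩

lemma infinitesimal_sum {ι : Type*} (s : Finset ι) (f : ι → ℝ*)
    (h : ∀ i ∈ s, Infinitesimal (f i)) : Infinitesimal (∑ i ∈ s, f i) := by
  classical
  induction s using Finset.induction_on with
  | empty => simpa using infinitesimal_zero
  | insert a t hx ih =>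
      rw [Finset.sum_insert hx]
      exact (h a (Finset.mem_insert_self a t)).add
        (ih fun i hi => h i (Finset.mem_insert_of_mem hi))

/-- Continuity of the roots, deformation version: if `u` is a root of `P` of
multiplicity `r`, `L(H) := -r! · H(u) / P⁽ʳ⁾(u)`, then for any `*ℝ`-deformation `Q ≠ P`
of `P` and any root `ξ` of `Q` with standard part `u`, one has
`(ξ - u)^r = L(Q - P) + ε ‖Q - P‖` for some infinitesimal `ε`. -/
theorem root_deformation_estimate (P : Polynomial ℝ) (n r : ℕ)
    (hdeg : P.natDegree = n) (hn : 1 ≤ n) (u : ℝ)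
    (hmult : ∀ i < r, (derivative^[i] P).eval u = 0)
    (hr : (derivative^[r] P).eval u ≠ 0)
    (L : Polynomial ℝ* → ℝ*)
    (hL : ∀ H : Polynomial ℝ*,
      L H = -(Nat.factorial r : ℝ*) * H.eval (u : ℝ*) / (((derivative^[r] P).eval u : ℝ) : ℝ*)) :
    ∀ Q : Polynomial ℝ*, Q.natDegree = n →
      (∀ i, Infinitesimal ((Q - P.map realToHyper).coeff i)) →
      Q ≠ P.map realToHyper →
      ∀ ξ : ℝ*, Q.eval ξ = 0 → IsSt ξ u →
        ∃ e : ℝ*, Infinitesimal e ∧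
          (ξ - (u : ℝ*)) ^ r = L (Q - P.map realToHyper) + e * polyNorm n (Q - P.map realToHyper) := by
  intro Q hQdeg hQinf hQne ξ hξ hst
  set H : Polynomial ℝ* := Q - P.map realToHyper with hH
  set y : ℝ* := ξ - (u : ℝ*) with hy
  set δ : ℝ* := polyNorm n H with hδ
  -- degree of H
  have hHdeg : H.natDegree ≤ n := by
    refine le_trans (natDegree_sub_le _ _) (max_le hQdeg.le ?_)
    exact natDegree_map_le.trans hdeg.le
  have hHlt : H.natDegree < n + 1 := Nat.lt_succ_of_le hHdeg
  -- δ positive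
  have hcoeff_le : ∀ i ∈ Finset.range (n + 1), |H.coeff i| ≤ δ := fun i hi =>
    Finset.le_sup' (fun i => |H.coeff i|) hi
  have hδpos : 0 < δ := by
    have hH0 : H ≠ 0 := sub_ne_zero_of_ne hQne
    obtain ⟨i, hi⟩ : ∃ i, H.coeff i ≠ 0 := by
      by_contra hcon
      push_neg at hcon
      exact hH0 (Polynomial.ext fun i => by simp [hcon i])
    have hin : i ∈ Finset.range (n + 1) := by
      by_contra hcon
      exact hi (coeff_eq_zero_of_natDegree_lt
        (lt_of_lt_of_le hHlt (by simpa [Finset.mem_range] using hcon)))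
    exact lt_of_lt_of_le (abs_pos.2 hi) (hcoeff_le i hin)
  have hδ0 : δ ≠ 0 := hδpos.ne'
  have hδinf : Infinitesimal δ := by
    obtain ⟨i, _, hie⟩ := Finset.exists_mem_eq_sup' (Finset.nonempty_range_iff.mpr
      (Nat.succ_ne_zero n)) (fun i => |H.coeff i|)
    rw [hδ, polyNorm, hie]
    exact (hQinf i).abs'
  -- Taylor expansion
  set T : Polynomial ℝ := (taylor u) P with hT
  have hTc : ∀ d < r, T.coeff d = 0 := by
    intro d hd
    rw [hT, taylor_coeff]
    have h1 : (d.factorial : ℝ) * (hasseDeriv d P).eval u = 0 := by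
      have h0 := congrFun (factorial_smul_hasseDeriv (R := ℝ) (k := d)) P
      rw [LinearMap.smul_apply, nsmul_eq_mul] at h0
      have h2 := congrArg (Polynomial.eval u) h0
      rw [eval_mul, eval_natCast] at h2
      rw [h2]
      exact hmult d hd
    have hd0 : (d.factorial : ℝ) ≠ 0 := Nat.cast_ne_zero.2 d.factorial_ne_zero
    exact (mul_eq_zero.1 h1).resolve_left hd0
  obtain ⟨T₁, hT₁⟩ := Polynomial.X_pow_dvd_iff.2 hTc
  set c : ℝ := T.coeff r with hc
  have hfc : (r.factorial : ℝ) * c = (derivative^[r] P).eval u := by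
    have h0 := congrFun (factorial_smul_hasseDeriv (R := ℝ) (k := r)) P
    rw [LinearMap.smul_apply, nsmul_eq_mul] at h0
    have h2 := congrArg (Polynomial.eval u) h0
    rw [eval_mul, eval_natCast] at h2
    rw [hc, hT, taylor_coeff, h2]
  have hc0 : c ≠ 0 := by
    intro h
    apply hr
    rw [← hfc, h, mul_zero]
  have hcc0 : ((c : ℝ*)) ≠ 0 := coe_ne_zero.2 hc0
  have hT₁c : T₁.coeff 0 = c := by
    rw [hc, hT₁]
    have h3 := Polynomial.coeff_X_pow_mul T₁ r 0
    rw [zero_add] at h3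
    exact h3.symm
  -- D and its standard part
  set D : ℝ* := (T₁.map realToHyper).eval y with hD
  have hy0 : IsSt y 0 := hst.infinitesimal_sub
  have hDst : IsSt D c := by
    have := isSt_eval T₁ hy0
    rwa [← coeff_zero_eq_eval_zero, hT₁c] at this
  have hD0 : D ≠ 0 := by
    intro h
    apply hc0
    exact (h ▸ hDst).unique (isSt_refl_real 0) |>.symm ▸ rfl
  -- key identity : y ^ r * D = - H.eval ξ
  have hPev : (P.map realToHyper).eval ξ = y ^ r * D := by
    have hmapT : T.map realToHyper = (P.map realToHyper).comp (X + C (u : ℝ*)) := by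
      rw [hT, taylor_apply, Polynomial.map_comp]
      simp [realToHyper_apply]
    have h1 : (T.map realToHyper).eval y = (P.map realToHyper).eval ξ := by
      rw [hmapT, eval_comp]
      simp [hy]
    rw [← h1, hT₁]
    simp [hD]
  have hHξ : H.eval ξ = -(y ^ r * D) := by
    rw [hH]
    simp [hξ, hPev]
  have hyr : y ^ r = -H.eval ξ / D := by
    rw [hHξ]
    field_simp
  -- value of L
  have hLH : L H = -H.eval (u : ℝ*) / (c : ℝ*) := by
    rw [hL H, ← hfc]
    have hk : ((r.factorial : ℝ) : ℝ*) = (r.factorial : ℝ*) := by push_cast; rfl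
    have hk0 : (r.factorial : ℝ*) ≠ 0 := Nat.cast_ne_zero.2 r.factorial_ne_zero
    rw [Hyperreal.coe_mul, hk]
    field_simp
  -- evaluation as a finite sum
  have hev : ∀ x : ℝ*, H.eval x = ∑ i ∈ Finset.range (n + 1), H.coeff i * x ^ i :=
    fun x => eval_eq_sum_range' hHlt x
  -- the infinitesimal sum W
  set W : ℝ* := ∑ i ∈ Finset.range (n + 1), |(u : ℝ*) ^ i - ξ ^ i| with hWdef
  have hWinf : Infinitesimal W := by
    refine infinitesimal_sum _ _ fun i _ => ?_
    have h := (isSt_pow (isSt_refl_real u) i).sub (isSt_pow hst i)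
    rw [sub_self] at h
    exact Hyperreal.Infinitesimal.abs' h
  have hsub : H.eval (u : ℝ*) - H.eval ξ
      = ∑ i ∈ Finset.range (n + 1), H.coeff i * ((u : ℝ*) ^ i - ξ ^ i) := by
    rw [hev, hev, ← Finset.sum_sub_distrib]
    exact Finset.sum_congr rfl fun i _ => by ring
  have habs : |H.eval (u : ℝ*) - H.eval ξ| ≤ δ * W := by
    rw [hsub]
    calc |∑ i ∈ Finset.range (n + 1), H.coeff i * ((u : ℝ*) ^ i - ξ ^ i)|
        ≤ ∑ i ∈ Finset.range (n + 1), |H.coeff i * ((u : ℝ*) ^ i - ξ ^ i)| :=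
          Finset.abs_sum_le_sum_abs _ _
      _ ≤ ∑ i ∈ Finset.range (n + 1), δ * |(u : ℝ*) ^ i - ξ ^ i| := by
          refine Finset.sum_le_sum fun i hi => ?_
          rw [abs_mul]
          exact mul_le_mul_of_nonneg_right (hcoeff_le i hi) (abs_nonneg _)
      _ = δ * W := by rw [hWdef, Finset.mul_sum]
  -- A is infinitesimal
  set A : ℝ* := (H.eval (u : ℝ*) - H.eval ξ) / δ with hAdef
  have hA : Infinitesimal A := by
    refine infinitesimal_of_abs_le hWinf ?_
    rw [hAdef, abs_div, abs_of_pos hδpos, div_le_iff₀ hδpos, mul_comm]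
    exact habs
  -- F is finite
  have hCs : (((∑ i ∈ Finset.range (n + 1), |u| ^ i : ℝ)) : ℝ*)
      = ∑ i ∈ Finset.range (n + 1), |(u : ℝ*)| ^ i := by
    rw [show (((∑ i ∈ Finset.range (n + 1), |u| ^ i : ℝ)) : ℝ*)
        = realToHyper (∑ i ∈ Finset.range (n + 1), |u| ^ i) from rfl, map_sum]
    refine Finset.sum_congr rfl fun i _ => ?_
    rw [map_pow, realToHyper_apply, ← Hyperreal.coe_abs]
  have hFb : |H.eval (u : ℝ*)| ≤ δ * (((∑ i ∈ Finset.range (n + 1), |u| ^ i : ℝ)) : ℝ*) := by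
    rw [hev, hCs]
    calc |∑ i ∈ Finset.range (n + 1), H.coeff i * (u : ℝ*) ^ i|
        ≤ ∑ i ∈ Finset.range (n + 1), |H.coeff i * (u : ℝ*) ^ i| :=
          Finset.abs_sum_le_sum_abs _ _
      _ ≤ ∑ i ∈ Finset.range (n + 1), δ * |(u : ℝ*)| ^ i := by
          refine Finset.sum_le_sum fun i hi => ?_
          rw [abs_mul, abs_pow]
          exact mul_le_mul_of_nonneg_right (hcoeff_le i hi) (pow_nonneg (abs_nonneg _) i)
      _ = _ := by rw [Finset.mul_sum]
  have hFfin : ¬ Infinite (H.eval (u : ℝ*) / δ) := by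
    refine not_infinite_of_abs_le (r := ∑ i ∈ Finset.range (n + 1), |u| ^ i) ?_
    rw [abs_div, abs_of_pos hδpos, div_le_iff₀ hδpos, mul_comm]
    exact hFb
  obtain ⟨f, hf⟩ := exists_st_of_not_infinite hFfin
  -- B is infinitesimal
  set B : ℝ* := D - (c : ℝ*) with hBdef
  have hB : Infinitesimal B := hDst.infinitesimal_sub
  -- the infinitesimal e
  set e : ℝ* := (y ^ r - L H) / δ with hedef
  have heq : e = ((c : ℝ*) * A + B * (H.eval (u : ℝ*) / δ)) * (D * (c : ℝ*))⁻¹ := by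
    rw [hedef, hyr, hLH, hAdef, hBdef]
    field_simp
    ring
  have he : Infinitesimal e := by
    rw [heq]
    have h1 : IsSt ((c : ℝ*) * A + B * (H.eval (u : ℝ*) / δ)) 0 := by
      have h := ((isSt_refl_real c).mul hA).add (IsSt.mul hB hf)
      simpa using h
    have h2 : IsSt (D * (c : ℝ*)) (c * c) := hDst.mul (isSt_refl_real c)
    have h3 : ¬ Infinitesimal (D * (c : ℝ*)) := by
      intro hcon
      exact mul_ne_zero hc0 hc0 (h2.unique hcon)
    have h4 := h1.mul (IsSt.inv h3 h2)
    simpa [Infinitesimal] using h4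
  refine ⟨e, he, ?_⟩
  have hfin : e * δ = y ^ r - L H := by
    rw [hedef]
    exact div_mul_cancel₀ _ hδ0
  have : (ξ - (u : ℝ*)) ^ r = y ^ r := by rw [hy]
  rw [this]
  linarith [hfin]
end

section
/- Let P ∈ ℝ[X] be of degree n ≥ 1 and let Q = P + Ξ be a *ℝ-deformation of P, where Ξ = ε₀ + ε₁X + ⋯ + εₙXⁿ has all coefficients infinitesimal. Suppose (ε₀,…,εₙ) = α₀·U₀ + α₀α₁·U₁ + ⋯ + (α₀α₁⋯α_m)·U_m, where α₀,…,α_m ∈ ℝ* are nonzero infinitesimals and U₀,…,U_m are linearly independent vectors of ℝ^{n+1}; write Uᵢ(X) for the real polynomial whose coefficient vector is Uᵢ. Let u ∈ ℝ be a root of P of multiplicity k (P^{(i)}(u) = 0 for i < k, P^{(k)}(u) ≠ 0), let j₀ ≤ m be an index such that Uᵢ(u) = 0 for all i < j₀ and U_{j₀}(u) ≠ 0, and let ξ ∈ ℝ* be a nonzero infinitesimal with Q(u + ξ) = 0. Assume moreover that for every 1 ≤ i ≤ n the quantity ξⁱ·Ξ^{(i)}(u)/(i!·Ξ(u)) is infinitesimal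 (where Ξ^{(i)} is the i-th derivative of Ξ; note Ξ(u) ≠ 0 under the stated hypotheses). Then ξ^k·P^{(k)}(u)/(k!·α₀α₁⋯α_{j₀}·U_{j₀}(u)) has standard part −1; that is, ξ^k ≈ −k!·α₀α₁⋯α_{j₀}·U_{j₀}(u)/P^{(k)}(u) up to a factor infinitely close to 1. -/
open Hyperreal Polynomial

/-- The real polynomial `v₀ + v₁ X + ⋯ + vₙ Xⁿ` associated with a vector
`v ∈ ℝ^{n+1}`. -/
noncomputable def vecPoly {n : ℕ} (v : Fin (n + 1) → ℝ) : Polynomial ℝ :=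
  ∑ j : Fin (n + 1), Polynomial.C (v j) * Polynomial.X ^ (j : ℕ)

lemma isSt_sum {ι : Type*} {s : Finset ι} {f : ι → ℝ*} {r : ι → ℝ}
    (h : ∀ i ∈ s, IsSt (f i) (r i)) : IsSt (∑ i ∈ s, f i) (∑ i ∈ s, r i) := by
  classical
  induction s using Finset.induction with
  | empty => simpa using isSt_refl_real 0
  | insert _ _ hx ih =>
    rw [Finset.sum_insert hx, Finset.sum_insert hx]
    exact (h _ (Finset.mem_insert_self _ _)).add
      (ih fun i hi => h i (Finset.mem_insert_of_mem hi))

lemma isSt_prod {ι : Type*} {s : Finset ι} {f : ι → ℝ*} {r : ι → ℝ}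
    (h : ∀ i ∈ s, IsSt (f i) (r i)) : IsSt (∏ i ∈ s, f i) (∏ i ∈ s, r i) := by
  classical
  induction s using Finset.induction with
  | empty => simpa using isSt_refl_real 1
  | insert _ _ hx ih =>
    rw [Finset.prod_insert hx, Finset.prod_insert hx]
    exact (h _ (Finset.mem_insert_self _ _)).mul
      (ih fun i hi => h i (Finset.mem_insert_of_mem hi))

lemma infinitesimal_pow' {x : ℝ*} (hx : Infinitesimal x) {j : ℕ} (hj : 1 ≤ j) :
    Infinitesimal (x ^ j) := by
  have : IsSt (x ^ j) (0 ^ j) := by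
    induction j with
    | zero => simpa using isSt_refl_real 1
    | succ i ih =>
      rcases Nat.eq_zero_or_pos i with h | h
      · have hx' : IsSt x 0 := hx
        simpa [h] using hx'
      · simpa [pow_succ] using (ih h).mul hx
  have h2 : IsSt (x ^ j) 0 := by simpa [zero_pow (by omega : j ≠ 0)] using this
  exact h2

/-- First-order estimate for a root of a `*ℝ`-deformation `Q = P + Ξ` near a root `u`
of multiplicity `k` of `P`, in terms of the Goze decomposition
`(ε₀,…,εₙ) = α₀U₀ + α₀α₁U₁ + ⋯` of the coefficient vector of `Ξ`:
`ξ^k ≈ -k!·α₀⋯α_{j₀}·U_{j₀}(u)/P⁽ᵏ⁾(u)`. -/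
theorem root_estimate_goze (P : Polynomial ℝ) (n : ℕ) (hdeg : P.natDegree = n)
    (hn : 1 ≤ n) (Ξ : Polynomial ℝ*) (Q : Polynomial ℝ*)
    (hQ : Q = P.map realToHyper + Ξ) (hQdeg : Q.natDegree = n)
    (hΞdeg : Ξ.natDegree ≤ n) (hΞ : ∀ i, Infinitesimal (Ξ.coeff i))
    (m : ℕ) (α : Fin (m + 1) → ℝ*) (U : Fin (m + 1) → (Fin (n + 1) → ℝ))
    (hα : ∀ i, Infinitesimal (α i) ∧ α i ≠ 0)
    (hUli : LinearIndependent ℝ U)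
    (hdecomp : ∀ j : Fin (n + 1),
      Ξ.coeff (j : ℕ) = ∑ i : Fin (m + 1), (∏ l ∈ Finset.Iic i, α l) * ((U i j : ℝ) : ℝ*))
    (u : ℝ) (k : ℕ)
    (hmult : ∀ i < k, (derivative^[i] P).eval u = 0)
    (hk : (derivative^[k] P).eval u ≠ 0)
    (j₀ : Fin (m + 1))
    (hj₀prev : ∀ i < j₀, (vecPoly (U i)).eval u = 0)
    (hj₀ : (vecPoly (U j₀)).eval u ≠ 0)
    (ξ : ℝ*) (hξ0 : ξ ≠ 0) (hξ : Infinitesimal ξ)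
    (hroot : Q.eval ((u : ℝ*) + ξ) = 0)
    (hsmall : ∀ i, 1 ≤ i → i ≤ n →
      Infinitesimal (ξ ^ i * (derivative^[i] Ξ).eval (u : ℝ*) /
        ((Nat.factorial i : ℝ*) * Ξ.eval (u : ℝ*)))) :
    IsSt (ξ ^ k * (((derivative^[k] P).eval u : ℝ) : ℝ*) /
      ((Nat.factorial k : ℝ*) * (∏ l ∈ Finset.Iic j₀, α l) *
        (((vecPoly (U j₀)).eval u : ℝ) : ℝ*))) (-1) := by
  classical
  set u' : ℝ* := (u : ℝ*) with hu'
  set A : ℝ* := ∏ l ∈ Finset.Iic j₀, α l with hA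
  set W : ℝ := (vecPoly (U j₀)).eval u with hW
  set pp : ℕ → ℝ := fun i => (hasseDeriv i P).eval u with hpp
  set e : ℕ → ℝ* := fun i => (hasseDeriv i Ξ).eval u' with he
  set B : ℝ* := Ξ.eval u' with hB
  -- basic facts
  have hfacR : ∀ i, (derivative^[i] P).eval u = (Nat.factorial i : ℝ) * pp i := by
    intro i; rw [← factorial_smul_hasseDeriv]; simp [hpp, nsmul_eq_mul]
  have hppk : pp k ≠ 0 := by
    intro h; apply hk; rw [hfacR k, h, mul_zero]
  have hpp0 : ∀ i < k, pp i = 0 := by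
    intro i hi
    have := hmult i hi
    rw [hfacR i] at this
    have hf : (Nat.factorial i : ℝ) ≠ 0 := Nat.cast_ne_zero.mpr (Nat.factorial_ne_zero i)
    exact (mul_eq_zero.mp this).resolve_left hf
  have hkn : k ≤ n := by
    by_contra h
    exact hk (by rw [iterate_derivative_eq_zero (by omega : P.natDegree < k)]; simp)
  have hA0 : A ≠ 0 := Finset.prod_ne_zero_iff.mpr fun l _ => (hα l).2
  have hW0 : ((W : ℝ) : ℝ*) ≠ 0 := coe_ne_zero.mpr hj₀
  have hfacH : ∀ i : ℕ, ((Nat.factorial i : ℝ*)) ≠ 0 :=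
    fun i => Nat.cast_ne_zero.mpr (Nat.factorial_ne_zero i)
  -- Taylor expansion of Q at u'
  have hTay : ∑ i ∈ Finset.range (n+1), (hasseDeriv i Q).eval u' * ξ^i = 0 := by
    have h1 : (taylor u' Q).eval ξ = Q.eval (ξ + u') := taylor_eval u' Q ξ
    rw [add_comm, ← h1, eval_eq_sum_range'
      (show (taylor u' Q).natDegree < n+1 by rw [natDegree_taylor, hQdeg]; omega)] at hroot
    simpa [taylor_coeff] using hroot
  have hQsplit : ∀ i, (hasseDeriv i Q).eval u' = ((pp i : ℝ) : ℝ*) + e i := by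
    intro i
    have hmap : hasseDeriv i (P.map realToHyper) = (hasseDeriv i P).map realToHyper := by
      ext j; simp [hasseDeriv_coeff, coeff_map]
    have hPe : (hasseDeriv i (P.map realToHyper)).eval u' = ((pp i : ℝ) : ℝ*) := by
      rw [hmap]
      have h2 : u' = realToHyper u := rfl
      rw [h2, eval_map, eval₂_at_apply]; rfl
    rw [hQ, map_add, eval_add, hPe]
  -- the two partial sums
  set D : ℝ* := ∑ i ∈ Finset.Ico k (n+1), ((pp i : ℝ) : ℝ*) * ξ^(i-k) with hD
  set SX : ℝ* := ∑ i ∈ Finset.range (n+1), e i * ξ^i with hSX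
  have hSP : ∑ i ∈ Finset.range (n+1), ((pp i : ℝ) : ℝ*) * ξ^i = ξ^k * D := by
    rw [Finset.range_eq_Ico,
      ← Finset.sum_Ico_consecutive _ (Nat.zero_le k) (by omega : k ≤ n+1)]
    have h1 : ∑ i ∈ Finset.Ico 0 k, ((pp i : ℝ) : ℝ*) * ξ^i = 0 := by
      apply Finset.sum_eq_zero
      intro i hi
      rw [hpp0 i (Finset.mem_Ico.mp hi).2]
      simp
    rw [h1, zero_add, hD, Finset.mul_sum]
    apply Finset.sum_congr rfl
    intro i hi
    have hki : k ≤ i := (Finset.mem_Ico.mp hi).1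
    rw [← mul_assoc, mul_comm (ξ^k), mul_assoc, ← pow_add, Nat.add_sub_cancel' hki]
  have hTay2 : ξ^k * D + SX = 0 := by
    rw [← hSP, hSX, ← Finset.sum_add_distrib]
    rw [← hTay]
    apply Finset.sum_congr rfl
    intro i _
    rw [hQsplit i, add_mul]
  -- standard part of D
  have hD1 : IsSt D (pp k) := by
    have := isSt_sum (s := Finset.Ico k (n+1))
      (f := fun i => ((pp i : ℝ) : ℝ*) * ξ^(i-k))
      (r := fun i => if i = k then pp k else 0) ?_
    · rwa [Finset.sum_ite_eq' _ _ _, if_pos (Finset.mem_Ico.mpr ⟨le_refl k, by omega⟩)] at this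
    · intro i hi
      rcases eq_or_ne i k with rfl | hne
      · simpa using isSt_refl_real (pp i)
      · have h1 : 1 ≤ i - k := by
          have := (Finset.mem_Ico.mp hi).1; omega
        have : IsSt (((pp i : ℝ) : ℝ*) * ξ^(i-k)) (pp i * 0) :=
          (isSt_refl_real (pp i)).mul (infinitesimal_pow' hξ h1)
        simpa [hne] using this
  have hDni : ¬ Infinitesimal D := fun h => hppk (h.unique hD1 ▸ rfl)
  have hD0 : D ≠ 0 := fun h => hDni (h ▸ infinitesimal_zero)
  -- decomposition of B
  have hvec : ∀ v : Fin (n+1) → ℝ, (((vecPoly v).eval u : ℝ) : ℝ*)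
      = ∑ j : Fin (n+1), ((v j : ℝ) : ℝ*) * u' ^ (j:ℕ) := by
    intro v
    have h0 : (((vecPoly v).eval u : ℝ) : ℝ*) = realToHyper ((vecPoly v).eval u) := rfl
    rw [h0, vecPoly, eval_finset_sum, map_sum]
    refine Finset.sum_congr rfl fun j _ => ?_
    simp only [eval_mul, eval_C, eval_pow, eval_X, map_mul, map_pow]
    rfl
  have hBsum : B = ∑ i : Fin (m + 1), (∏ l ∈ Finset.Iic i, α l) *
      (((vecPoly (U i)).eval u : ℝ) : ℝ*) := by
    rw [hB, eval_eq_sum_range' (show Ξ.natDegree < n+1 by omega), ← Fin.sum_univ_eq_sum_range]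
    simp_rw [hdecomp, hvec, Finset.sum_mul, Finset.mul_sum]
    rw [Finset.sum_comm]
    exact Finset.sum_congr rfl fun i _ => Finset.sum_congr rfl fun j _ => by ring
  have hBA : IsSt (B / (A * ((W : ℝ) : ℝ*))) 1 := by
    rw [hBsum, Finset.sum_div]
    have := isSt_sum (s := Finset.univ)
      (f := fun i : Fin (m+1) => (∏ l ∈ Finset.Iic i, α l) *
        (((vecPoly (U i)).eval u : ℝ) : ℝ*) / (A * ((W : ℝ) : ℝ*)))
      (r := fun i => if i = j₀ then 1 else 0) ?_
    · rwa [Finset.sum_ite_eq' _ _ _, if_pos (Finset.mem_univ _)] at this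
    · intro i _
      rcases lt_trichotomy i j₀ with hlt | rfl | hgt
      · rw [hj₀prev i hlt]
        simpa [hlt.ne] using isSt_refl_real 0
      · rw [← hA, ← hW, if_pos rfl, div_self (by exact mul_ne_zero hA0 hW0)]
        exact coe_one ▸ isSt_refl_real 1
      · have hsub : Finset.Iic j₀ ⊆ Finset.Iic i := Finset.Iic_subset_Iic.mpr hgt.le
        have hprod : ∏ l ∈ Finset.Iic i, α l
            = (∏ l ∈ Finset.Iic i \ Finset.Iic j₀, α l) * A := by
          rw [hA, Finset.prod_sdiff hsub]
        have hterm : (∏ l ∈ Finset.Iic i, α l) *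
              (((vecPoly (U i)).eval u : ℝ) : ℝ*) / (A * ((W : ℝ) : ℝ*))
            = (∏ l ∈ Finset.Iic i \ Finset.Iic j₀, α l) *
              ((((vecPoly (U i)).eval u : ℝ) : ℝ*) / ((W : ℝ) : ℝ*)) := by
          rw [hprod]
          field_simp
        rw [hterm]
        have hmem : i ∈ Finset.Iic i \ Finset.Iic j₀ := by
          simp [Finset.mem_sdiff, Finset.mem_Iic, hgt.not_ge]
        have hp0 : IsSt (∏ l ∈ Finset.Iic i \ Finset.Iic j₀, α l) 0 := by
          have := isSt_prod (s := Finset.Iic i \ Finset.Iic j₀) (f := α)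
            (r := fun _ => 0) (fun l _ => (hα l).1)
          have hz : (∏ _l ∈ Finset.Iic i \ Finset.Iic j₀, (0:ℝ)) = 0 :=
            Finset.prod_eq_zero hmem rfl
          rwa [hz] at this
        have : IsSt ((∏ l ∈ Finset.Iic i \ Finset.Iic j₀, α l) *
            ((((vecPoly (U i)).eval u : ℝ) : ℝ*) / ((W : ℝ) : ℝ*)))
            (0 * ((vecPoly (U i)).eval u / W)) := by
          apply hp0.mul
          have : ((((vecPoly (U i)).eval u : ℝ) : ℝ*) / ((W : ℝ) : ℝ*))
              = (((vecPoly (U i)).eval u / W : ℝ) : ℝ*) := by push_cast; ring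
          rw [this]
          exact isSt_refl_real _
        simpa [hgt.ne'] using this
  have hB0 : B ≠ 0 := by
    intro h
    have h0 : IsSt (B / (A * ((W : ℝ) : ℝ*))) 0 := by
      rw [h, zero_div]; exact isSt_refl_real 0
    exact one_ne_zero (hBA.unique h0)
  -- standard part of SX / B
  have hfacX : ∀ i, (derivative^[i] Ξ).eval u' = (Nat.factorial i : ℝ*) * e i := by
    intro i; rw [← factorial_smul_hasseDeriv]; simp [he, nsmul_eq_mul]
  have hC : IsSt (SX / B) 1 := by
    rw [hSX, Finset.sum_div]
    have := isSt_sum (s := Finset.range (n+1))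
      (f := fun i => e i * ξ^i / B)
      (r := fun i => if i = 0 then 1 else 0) ?_
    · rwa [Finset.sum_ite_eq' _ _ _, if_pos (Finset.mem_range.mpr (by omega))] at this
    · intro i hi
      rcases Nat.eq_zero_or_pos i with rfl | hpos
      · have he0 : e 0 = B := by simp [he, hB]
        rw [he0, pow_zero, mul_one, div_self hB0]
        simpa using isSt_refl_real 1
      · have hsm := hsmall i hpos (by have := Finset.mem_range.mp hi; omega)
        rw [hfacX i] at hsm
        have h2 : e i * ξ ^ i / B
            = ξ ^ i * ((Nat.factorial i : ℝ*) * e i) / ((Nat.factorial i : ℝ*) * B) := by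
          field_simp
        rw [h2, if_neg (Nat.pos_iff_ne_zero.mp hpos)]
        exact hsm
  -- final assembly
  have hPD : IsSt (((pp k : ℝ) : ℝ*) / D) 1 := by
    have h1 := (isSt_refl_real (pp k)).mul (hD1.inv hDni)
    rw [← div_eq_mul_inv, mul_inv_cancel₀ hppk] at h1
    exact h1
  have hTay3 : ξ^k * D = -SX := eq_neg_of_add_eq_zero_left hTay2
  have hfin : IsSt (ξ^k * ((pp k : ℝ) : ℝ*) / (A * ((W : ℝ) : ℝ*))) (-1) := by
    have heq : ξ^k * ((pp k : ℝ) : ℝ*) / (A * ((W : ℝ) : ℝ*))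
        = -((B / (A * ((W : ℝ) : ℝ*))) * (SX / B) * (((pp k : ℝ) : ℝ*) / D)) := by
      field_simp
      linear_combination ((pp k : ℝ) : ℝ*) * hTay2
    rw [heq]
    have h3 := ((hBA.mul hC).mul hPD).neg
    simpa using h3
  have hnum : (((derivative^[k] P).eval u : ℝ) : ℝ*)
      = (Nat.factorial k : ℝ*) * ((pp k : ℝ) : ℝ*) := by
    rw [hfacR k]
    have h4 : (((Nat.factorial k : ℝ) * pp k : ℝ) : ℝ*)
        = realToHyper ((Nat.factorial k : ℝ) * pp k) := rfl
    rw [h4, map_mul, map_natCast]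
    rfl
  rw [hnum]
  have hcancel : ξ ^ k * ((Nat.factorial k : ℝ*) * ((pp k : ℝ) : ℝ*)) /
        ((Nat.factorial k : ℝ*) * A * ((W : ℝ) : ℝ*))
      = ξ^k * ((pp k : ℝ) : ℝ*) / (A * ((W : ℝ) : ℝ*)) := by
    field_simp
  rw [← hA, ← hW] at *
  rw [hcancel]
  exact hfin
end

section
/- Let P ∈ ℝ[X] be a nonzero polynomial. An element ξ ∈ ℝ* is a pseudozero of P (i.e., a root of some *ℝ-deformation of P) if and only if ξ is finite and st ξ is a root of P. Equivalently, the set of pseudozeros of P is the union of the halos h(u) = {u + δ : δ infinitesimal} over all real roots u of P. -/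
open Hyperreal Polynomial

lemma myIsSt_pow {x : ℝ*} {r : ℝ} (h : IsSt x r) : ∀ k : ℕ, IsSt (x ^ k) (r ^ k)
  | 0 => by
      have := isSt_refl_real 1
      rw [Hyperreal.coe_one] at this
      simpa using this
  | k + 1 => by
      rw [pow_succ, pow_succ]
      exact (myIsSt_pow h k).mul h

lemma myIsSt_sum {s : Finset ℕ} {f : ℕ → ℝ*} {g : ℕ → ℝ}
    (h : ∀ i ∈ s, IsSt (f i) (g i)) :
    IsSt (∑ i ∈ s, f i) (∑ i ∈ s, g i) := by
  classical
  induction s using Finset.induction with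
  | empty =>
      have := isSt_refl_real 0
      rw [Hyperreal.coe_zero] at this
      simpa using this
  | @insert a s hx ih =>
      rw [Finset.sum_insert hx, Finset.sum_insert hx]
      exact (h _ (Finset.mem_insert_self _ _)).add
        (ih fun i hi => h i (Finset.mem_insert_of_mem hi))

lemma myIsSt_eval {Q : Polynomial ℝ*} {p : Polynomial ℝ}
    (hco : ∀ i, IsSt (Q.coeff i) (p.coeff i)) {x : ℝ*} {u : ℝ} (hx : IsSt x u) :
    IsSt (Q.eval x) (p.eval u) := by
  have hQ : Q.natDegree < max Q.natDegree p.natDegree + 1 :=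
    Nat.lt_succ_of_le (le_max_left _ _)
  have hp : p.natDegree < max Q.natDegree p.natDegree + 1 :=
    Nat.lt_succ_of_le (le_max_right _ _)
  rw [Polynomial.eval_eq_sum_range' hQ, Polynomial.eval_eq_sum_range' hp]
  exact myIsSt_sum fun i _ => (hco i).mul (myIsSt_pow hx i)

/-- Pseudozeros of a nonzero real polynomial `P`: an element `ξ ∈ ℝ*` is a root of
some `*ℝ`-deformation of `P` iff `ξ` is finite and `st ξ` is a root of `P`; i.e. the
set of pseudozeros is the union of the halos of the real roots of `P`. -/
theorem pseudozeros_eq_halos_of_roots (P : Polynomial ℝ) (hP : P ≠ 0) (ξ : ℝ*) :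
    (∃ Q : Polynomial ℝ*, Q.natDegree = P.natDegree ∧
        (∀ i, Infinitesimal ((Q - P.map realToHyper).coeff i)) ∧ Q.eval ξ = 0) ↔
      (¬Infinite ξ ∧ P.eval (st ξ) = 0) := by
  constructor
  · rintro ⟨Q, hdeg, hinfml, heval⟩
    -- coefficients of Q are infinitely close to those of P
    have hco : ∀ i, IsSt (Q.coeff i) (P.coeff i) := by
      intro i
      have h := hinfml i
      rw [Polynomial.coeff_sub, Polynomial.coeff_map, realToHyper_apply] at h
      have : IsSt (Q.coeff i - ↑(P.coeff i)) 0 := h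
      have := this.add (isSt_refl_real (P.coeff i))
      simpa using this
    set n := P.natDegree with hn
    -- ξ is finite
    have hfin : ¬Infinite ξ := by
      intro hinf
      have hx0 : ξ ≠ 0 := hinf.ne_zero
      have hinv : IsSt ξ⁻¹ 0 := infinitesimal_inv_of_infinite hinf
      have hkey : (∑ i ∈ Finset.range (n + 1), Q.coeff i * (ξ⁻¹) ^ (n - i)) = 0 := by
        have hfactor : ∀ i ∈ Finset.range (n + 1),
            Q.coeff i * ξ ^ i * (ξ⁻¹) ^ n = Q.coeff i * (ξ⁻¹) ^ (n - i) := by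
          intro i hi
          rw [Finset.mem_range] at hi
          have hi' : i ≤ n := Nat.lt_succ_iff.mp hi
          have : ξ ^ i * (ξ⁻¹) ^ n = (ξ⁻¹) ^ (n - i) := by
            rw [inv_pow, inv_pow, pow_sub₀ ξ hx0 hi', mul_inv, inv_inv, mul_comm]
          rw [mul_assoc, this]
        calc (∑ i ∈ Finset.range (n + 1), Q.coeff i * (ξ⁻¹) ^ (n - i))
            = ∑ i ∈ Finset.range (n + 1), Q.coeff i * ξ ^ i * (ξ⁻¹) ^ n :=
              (Finset.sum_congr rfl hfactor).symm
          _ = (∑ i ∈ Finset.range (n + 1), Q.coeff i * ξ ^ i) * (ξ⁻¹) ^ n := by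
              rw [Finset.sum_mul]
          _ = Q.eval ξ * (ξ⁻¹) ^ n := by
              have hlt : Q.natDegree < n + 1 := by rw [hdeg]; exact Nat.lt_succ_self n
              rw [Polynomial.eval_eq_sum_range' hlt]
          _ = 0 := by rw [heval, zero_mul]
      have hst : IsSt (∑ i ∈ Finset.range (n + 1), Q.coeff i * (ξ⁻¹) ^ (n - i))
          (∑ i ∈ Finset.range (n + 1), P.coeff i * (0 : ℝ) ^ (n - i)) :=
        myIsSt_sum fun i _ => (hco i).mul (myIsSt_pow hinv (n - i))
      have hsum : (∑ i ∈ Finset.range (n + 1), P.coeff i * (0 : ℝ) ^ (n - i)) = P.coeff n := by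
        rw [Finset.sum_eq_single n]
        · simp
        · intro i hi hne
          rw [Finset.mem_range] at hi
          have : n - i ≠ 0 := Nat.sub_ne_zero_of_lt (lt_of_le_of_ne (Nat.lt_succ_iff.mp hi) hne)
          rw [zero_pow this, mul_zero]
        · intro h; exact absurd (Finset.self_mem_range_succ n) h
      rw [hkey, hsum] at hst
      have h0 : IsSt (0 : ℝ*) (0 : ℝ) := by
        have := isSt_refl_real 0; rwa [Hyperreal.coe_zero] at this
      have : P.coeff n = 0 := hst.unique h0
      exact leadingCoeff_ne_zero.mpr hP this
    refine ⟨hfin, ?_⟩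
    have hst : IsSt (Q.eval ξ) (P.eval (st ξ)) := myIsSt_eval hco (isSt_st' hfin)
    rw [heval] at hst
    have h0 : IsSt (0 : ℝ*) (0 : ℝ) := by
      have := isSt_refl_real 0; rwa [Hyperreal.coe_zero] at this
    exact (h0.unique hst).symm
  · rintro ⟨hfin, hroot⟩
    set u := st ξ with hu
    set e : ℝ* := (P.map realToHyper).eval ξ with he
    have hcoe : ∀ i, IsSt ((P.map realToHyper).coeff i) (P.coeff i) := by
      intro i
      rw [Polynomial.coeff_map, realToHyper_apply]
      exact isSt_refl_real _
    have hste : IsSt e 0 := by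
      have := myIsSt_eval hcoe (isSt_st' hfin)
      rwa [← hu, hroot] at this
    refine ⟨P.map realToHyper - C e, ?_, ?_, ?_⟩
    · rw [Polynomial.natDegree_sub_C, Polynomial.natDegree_map]
    · intro i
      rw [sub_sub_cancel_left, Polynomial.coeff_neg, Polynomial.coeff_C]
      split
      · show IsSt (-e) 0; simpa using hste.neg
      · simpa using infinitesimal_zero
    · rw [Polynomial.eval_sub, Polynomial.eval_C, sub_self]
end
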